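/- Let q be a prime power, m ≥ 1, and let B be an F_q-basis of F_{q^m} with dual basis B*. Let C ⊆ F_{q^m}^n be a linear code with generator matrix G (a matrix whose row span over F_{q^m} is C) and parity-check matrix H (a matrix such that C = {c : H·cᵀ = 0}). Then the F_q-row span of ExpMat_B(G) equals Exp_B(C), and Exp_B(C) = {v ∈ F_q^{mn} : ExpMat_{B*}(H) · vᵀ = 0}. -/

import Mathlib

open Module

/-- Expansion of a vector over a basis `B` of `F` over `K`, as a `K`-linear map:
the entry of index `(i, j)` is the `j`-th coordinate of `c i` in the basis `B`. -/
noncomputable def expLin {K F : Type*} [Field K] [Field F] [Algebra K F] {m : ℕ}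
    (B : Basis (Fin m) K F) (ι : Type*) : (ι → F) →ₗ[K] (ι × Fin m → K) where
  toFun c := fun p => B.repr (c p.1) p.2
  map_add' c d := by funext p; simp
  map_smul' k c := by funext p; simp

/-- Expansion of a matrix over a basis `B`: the row of index `(i, j)` is
`Exp_B(b_j • (row i of M))`. -/
noncomputable def expMat {K F : Type*} [Field K] [Field F] [Algebra K F] {m : ℕ}
    (B : Basis (Fin m) K F) {ι κ : Type*} (M : Matrix ι κ F) :
    Matrix (ι × Fin m) (κ × Fin m) K :=
  fun p q => B.repr (B p.2 * M p.1 q.1) q.2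

/-- if `G` is a generator matrix and `H` a parity-check matrix of a code
`C ⊆ F_{q^m}^n`, and `B*` is the trace-dual basis of `B`, then `ExpMat_B(G)` is a
generator matrix of `Exp_B(C)` and `ExpMat_{B*}(H)` is a parity-check matrix of
`Exp_B(C)`. -/
theorem stmt_5 {K F : Type*} [Field K] [Fintype K] [Field F] [Algebra K F]
    {q m n k r : ℕ} (hq : Fintype.card K = q) (hm1 : 1 ≤ m)
    (B Bd : Basis (Fin m) K F)
    (hdual : ∀ i j, (∑ t : Fin m, (B i * Bd j) ^ q ^ (t : ℕ)) =
      (if i = j then (1 : F) else 0))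
    (C : Submodule F (Fin n → F))
    (G : Matrix (Fin k) (Fin n) F)
    (hG : Submodule.span F (Set.range fun i => G i) = C)
    (H : Matrix (Fin r) (Fin n) F)
    (hH : ∀ c : Fin n → F, c ∈ C ↔ H.mulVec c = 0) :
    Submodule.span K (Set.range fun p => expMat B G p) =
        (C.restrictScalars K).map (expLin B (Fin n)) ∧
      ∀ v : Fin n × Fin m → K,
        v ∈ (C.restrictScalars K).map (expLin B (Fin n)) ↔
          (expMat Bd H).mulVec v = 0 := by
  classical
  -- basic facts about q and the characteristic
  have hqpos : 0 < q := hq ▸ Fintype.card_pos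
  obtain ⟨p, hp⟩ := CharP.exists K
  haveI : CharP K p := hp
  have hpprime : p.Prime := CharP.char_is_prime K p
  haveI := Fact.mk hpprime
  haveI : CharP F p := charP_of_injective_algebraMap (algebraMap K F).injective p
  obtain ⟨f, hf⟩ : ∃ f : ℕ, q = p ^ f := by
    obtain ⟨nn, _, hn2⟩ := FiniteField.card K p
    exact ⟨nn, by rw [← hq, hn2]⟩
  -- the trace-like map
  set T : F → F := fun x => ∑ t : Fin m, x ^ q ^ (t : ℕ) with hT
  have hTadd : ∀ x y : F, T (x + y) = T x + T y := by
    intro x y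
    simp only [hT]
    rw [← Finset.sum_add_distrib]
    refine Finset.sum_congr rfl fun t _ => ?_
    rw [hf, ← pow_mul]
    exact add_pow_char_pow x y p (f * (t : ℕ))
  let Th : F →+ F := AddMonoidHom.mk' T hTadd
  have hThapp : ∀ x, Th x = T x := fun _ => rfl
  have hTzero : T 0 = 0 := by rw [← hThapp, map_zero]
  have hkfix : ∀ (c : K) (e : ℕ), (algebraMap K F c) ^ q ^ e = algebraMap K F c := by
    intro c e
    induction e with
    | zero => simp
    | succ e ih =>
      rw [pow_succ, pow_mul, ih, ← map_pow, ← hq, FiniteField.pow_card]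
  have hTsmul : ∀ (c : K) (x : F), T (c • x) = c • T x := by
    intro c x
    simp only [hT, Algebra.smul_def, Finset.mul_sum, mul_pow]
    exact Finset.sum_congr rfl fun t _ => by rw [hkfix c t]
  -- duality
  have hdual' : ∀ s t, T (Bd s * B t) = if t = s then (1 : F) else 0 := by
    intro s t
    rw [mul_comm, hT]
    exact hdual t s
  have hTmul : ∀ x y : F,
      T (x * y) = algebraMap K F (∑ s : Fin m, Bd.repr x s * B.repr y s) := by
    intro x y
    conv_lhs => rw [← Bd.sum_repr x, ← B.sum_repr y]
    rw [Finset.sum_mul_sum, ← hThapp, map_sum]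
    simp only [map_sum]
    have h1 : ∀ s t, Th ((Bd.repr x s • Bd s) * (B.repr y t • B t))
        = (Bd.repr x s * B.repr y t) • (if t = s then (1 : F) else 0) := by
      intro s t
      rw [smul_mul_smul_comm, hThapp, hTsmul, hdual']
    rw [show (∑ s : Fin m, ∑ t : Fin m, Th ((Bd.repr x s • Bd s) * (B.repr y t • B t)))
        = ∑ s : Fin m, ∑ t : Fin m,
            (Bd.repr x s * B.repr y t) • (if t = s then (1 : F) else 0)
      from Finset.sum_congr rfl fun s _ => Finset.sum_congr rfl fun t _ => h1 s t]
    refine Finset.sum_congr rfl fun s _ => ?_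
    simp [Finset.sum_ite_eq', Algebra.smul_def]
  have hrepr : ∀ (x : F) (j : Fin m), T (Bd j * x) = algebraMap K F (B.repr x j) := by
    intro x j
    rw [hTmul]
    congr 1
    simp [Basis.repr_self, Finsupp.single_apply, Finset.sum_ite_eq]
  have hker : ∀ x : F, (∀ j, T (Bd j * x) = 0) → x = 0 := by
    intro x h
    refine B.ext_elem fun j => ?_
    rw [map_zero, Finsupp.zero_apply]
    apply (algebraMap K F).injective
    rw [← hrepr, h j, map_zero]
  -- key computation relating the expanded parity check to the original one
  have hkey2 : ∀ (w : Fin n → F) (i : Fin r) (j : Fin m),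
      algebraMap K F ((expMat Bd H).mulVec (expLin B (Fin n) w) (i, j))
        = T (Bd j * H.mulVec w i) := by
    intro w i j
    have h1 : (expMat Bd H).mulVec (expLin B (Fin n) w) (i, j)
        = ∑ l : Fin n, ∑ t : Fin m, Bd.repr (Bd j * H i l) t * B.repr (w l) t := by
      simp [Matrix.mulVec, dotProduct, expMat, expLin, Fintype.sum_prod_type]
    rw [h1, map_sum]
    have h2 : ∀ l : Fin n,
        algebraMap K F (∑ t : Fin m, Bd.repr (Bd j * H i l) t * B.repr (w l) t)
          = T ((Bd j * H i l) * w l) := fun l => (hTmul (Bd j * H i l) (w l)).symm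
    rw [Finset.sum_congr rfl fun l _ => h2 l]
    rw [show (∑ l : Fin n, T ((Bd j * H i l) * w l))
        = Th (∑ l : Fin n, (Bd j * H i l) * w l) from (map_sum Th _ _).symm]
    rw [hThapp]
    congr 1
    rw [Matrix.mulVec, dotProduct, Finset.mul_sum]
    exact Finset.sum_congr rfl fun l _ => mul_assoc _ _ _
  -- Part 1
  have part1 : Submodule.span K (Set.range fun p => expMat B G p) =
      (C.restrictScalars K).map (expLin B (Fin n)) := by
    have hrow : (fun p : Fin k × Fin m => expMat B G p)
        = fun p => expLin B (Fin n) (B p.2 • G p.1) := by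
      funext p x
      simp [expMat, expLin]
    have hspan1 : Submodule.span K (Set.range fun p : Fin k × Fin m => B p.2 • G p.1)
        = C.restrictScalars K := by
      apply le_antisymm
      · rw [Submodule.span_le]
        rintro _ ⟨p, rfl⟩
        have hGi : G p.1 ∈ C := by
          rw [← hG]; exact Submodule.subset_span ⟨p.1, rfl⟩
        exact C.smul_mem _ hGi
      · intro c hc
        have hc' : c ∈ C := hc
        rw [← hG] at hc'
        obtain ⟨a, ha⟩ := (Submodule.mem_span_range_iff_exists_fun F).mp hc'
        rw [← ha]
        refine Submodule.sum_mem _ fun i _ => ?_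
        rw [← B.sum_repr (a i), Finset.sum_smul]
        refine Submodule.sum_mem _ fun j _ => ?_
        rw [smul_assoc]
        exact Submodule.smul_mem _ _ (Submodule.subset_span ⟨(i, j), rfl⟩)
    rw [hrow, show (Set.range fun p : Fin k × Fin m => expLin B (Fin n) (B p.2 • G p.1))
        = expLin B (Fin n) '' (Set.range fun p : Fin k × Fin m => B p.2 • G p.1) by
          rw [← Set.range_comp]; rfl,
      Submodule.span_image, hspan1]
  refine ⟨part1, fun v => ⟨?_, ?_⟩⟩
  · rintro ⟨c, hc, rfl⟩
    have hc0 : H.mulVec c = 0 := (hH c).mp hc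
    funext pij
    obtain ⟨i, j⟩ := pij
    apply (algebraMap K F).injective
    rw [hkey2 c i j, hc0]
    simp [hTzero]
  · intro hv
    set c : Fin n → F := fun l => ∑ t : Fin m, v (l, t) • B t with hcdef
    have hvc : expLin B (Fin n) c = v := by
      funext pp
      simp [expLin, hcdef, Basis.repr_self, Finsupp.single_apply, Finset.sum_ite_eq]
    have hHc : H.mulVec c = 0 := by
      funext i
      refine hker _ fun j => ?_
      rw [← hkey2 c i j, hvc, hv]
      simp
    exact ⟨c, (hH c).mpr hHc, hvc⟩
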